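/- Let W be the unique formal power series over ℚ with constant coefficient 1 satisfying W² = 1 − 6z² + 5z⁴. The series 1 + z² − W is divisible by 2z²; set S = (1 + z² − W)/(2z²) ∈ ℚ⟦z⟧ (its constant coefficient is 2). A decorated dual skew path is a word over the alphabet {U, V, D}, where U (black up-step) and V (blue up-step) each contribute +1 to the height and D contributes −1, such that every prefix has nonnegative height and the factors VD and DV do not occur. Then for every j ≥ 0, the generating function Σ_{n≥0} (number of decorated dual skew paths of length n with final height j) z^n equals (3z² − 3 + W) z^j S^{j+1} / (2(z² − 2)), where z² − 2 is invertible in ℚ⟦z⟧. -/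

import Mathlib

noncomputable section

/-- A step of a decorated dual skew path: black up, blue up, or down. -/
inductive DualStep : Type
  | up : DualStep
  | blue : DualStep
  | down : DualStep

/-- Height change of a step: `U ↦ +1`, `V ↦ +1`, `D ↦ -1`. -/
def DualStep.wt : DualStep → ℤ
  | .up => 1
  | .blue => 1
  | .down => -1

/-- Total height change of a word of steps. -/
def dualHeight (p : List DualStep) : ℤ := (p.map DualStep.wt).sum

/-- A decorated dual skew path: every prefix has nonnegative height and the factors
`VD` and `DV` do not occur. -/
def IsDualSkew (p : List DualStep) : Prop :=
  (∀ q, q <+: p → 0 ≤ dualHeight q) ∧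
  ¬ [DualStep.blue, DualStep.down] <:+: p ∧ ¬ [DualStep.down, DualStep.blue] <:+: p

/-- The number of decorated dual skew paths of length `n` with final height `j`. -/
def dualCount (n j : ℕ) : ℕ :=
  Nat.card {p : List DualStep // p.length = n ∧ IsDualSkew p ∧ dualHeight p = (j : ℤ)}

deriving instance DecidableEq for DualStep

instance : Fintype DualStep :=
  ⟨{.up, .blue, .down}, fun x => by cases x <;> simp⟩

namespace DualSkewAux

open PowerSeries

/-- Class of the last letter: `0` for empty or `U`, `1` for `V`, `2` for `D`. -/
def lastCls (p : List DualStep) : ℕ :=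
  match p.getLast? with
  | some .blue => 1
  | some .down => 2
  | _ => 0

lemma lastCls_cases (p : List DualStep) : lastCls p = 0 ∨ lastCls p = 1 ∨ lastCls p = 2 := by
  unfold lastCls
  rcases h : p.getLast? with _ | s
  · simp
  · cases s <;> simp

lemma lastCls_iff_up {p : List DualStep} (hp : p ≠ []) :
    lastCls p = 0 ↔ p.getLast? = some .up := by
  rcases h : p.getLast? with _ | s
  · exact absurd (List.getLast?_eq_none_iff.mp h) hp
  · cases s <;> simp [lastCls, h]

lemma lastCls_iff_blue {p : List DualStep} :
    lastCls p = 1 ↔ p.getLast? = some .blue := by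
  rcases h : p.getLast? with _ | s
  · simp [lastCls, h]
  · cases s <;> simp [lastCls, h]

lemma lastCls_iff_down {p : List DualStep} :
    lastCls p = 2 ↔ p.getLast? = some .down := by
  rcases h : p.getLast? with _ | s
  · simp [lastCls, h]
  · cases s <;> simp [lastCls, h]

lemma dualHeight_concat (q : List DualStep) (s : DualStep) :
    dualHeight (q ++ [s]) = dualHeight q + s.wt := by
  simp [dualHeight]

lemma isDualSkew_nil : IsDualSkew ([] : List DualStep) := by
  refine ⟨fun q hq => ?_, by simp, by simp⟩
  rw [List.prefix_nil.mp hq]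
  simp [dualHeight]

lemma pair_infix_concat {q : List DualStep} {s a b : DualStep} :
    [a, b] <:+: q ++ [s] ↔ [a, b] <:+: q ∨ (q.getLast? = some a ∧ b = s) := by
  constructor
  · rintro ⟨t, u, htu⟩
    rcases u.eq_nil_or_concat with rfl | ⟨u', c, rfl⟩
    · have h : (t ++ [a]) ++ [b] = q ++ [s] := by simpa using htu
      obtain ⟨h1, h2⟩ := List.append_inj' h rfl
      refine Or.inr ⟨?_, by simpa using h2⟩
      rw [← h1]
      exact List.getLast?_concat
    · have h : (t ++ [a, b] ++ u') ++ [c] = q ++ [s] := by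
        simpa [List.concat_eq_append, List.append_assoc] using htu
      obtain ⟨h1, h2⟩ := List.append_inj' h rfl
      exact Or.inl ⟨t, u', h1⟩
  · rintro (h | ⟨h, rfl⟩)
    · exact h.trans ⟨[], [s], by simp⟩
    · obtain ⟨q₀, rfl⟩ := List.getLast?_eq_some_iff.mp h
      exact ⟨q₀, [], by simp⟩

lemma isDualSkew_concat {q : List DualStep} {s : DualStep} :
    IsDualSkew (q ++ [s]) ↔
      IsDualSkew q ∧ 0 ≤ dualHeight q + s.wt ∧
        (q.getLast? = some .blue → s ≠ .down) ∧
        (q.getLast? = some .down → s ≠ .blue) := by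
  constructor
  · rintro ⟨hpre, hVD, hDV⟩
    refine ⟨⟨fun r hr => hpre r (hr.trans (List.prefix_append q [s])),
        fun h => hVD (h.trans ⟨[], [s], by simp⟩),
        fun h => hDV (h.trans ⟨[], [s], by simp⟩)⟩, ?_, ?_, ?_⟩
    · have := hpre (q ++ [s]) List.prefix_rfl
      rwa [dualHeight_concat] at this
    · rintro h rfl
      exact hVD (pair_infix_concat.mpr (Or.inr ⟨h, rfl⟩))
    · rintro h rfl
      exact hDV (pair_infix_concat.mpr (Or.inr ⟨h, rfl⟩))
  · rintro ⟨⟨hpre, hVD, hDV⟩, hh, h1, h2⟩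
    refine ⟨fun r hr => ?_, fun h => ?_, fun h => ?_⟩
    · rcases List.prefix_concat_iff.mp hr with rfl | hr'
      · rwa [dualHeight_concat]
      · exact hpre r hr'
    · rcases pair_infix_concat.mp h with h' | ⟨hl, hb⟩
      · exact hVD h'
      · exact h1 hl hb.symm
    · rcases pair_infix_concat.mp h with h' | ⟨hl, hb⟩
      · exact hDV h'
      · exact h2 hl hb.symm

lemma finite_sub {n : ℕ} (P : List DualStep → Prop) (hP : ∀ p, P p → p.length = n) :
    Finite {p : List DualStep // P p} := by
  have : Finite {l : List DualStep // l.length = n} :=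
    inferInstanceAs (Finite (List.Vector DualStep n))
  exact Finite.of_injective
    (fun x => (⟨x.1, hP _ x.2⟩ : {l : List DualStep // l.length = n}))
    (fun a b h => Subtype.ext (by simpa using congrArg Subtype.val h))

lemma card_or {n : ℕ} (P A B : List DualStep → Prop) [DecidablePred A]
    (hP : ∀ p, P p → p.length = n) (hAB : ∀ p, A p → B p → False) :
    Nat.card {p : List DualStep // P p ∧ (A p ∨ B p)} =
      Nat.card {p : List DualStep // P p ∧ A p} +
        Nat.card {p : List DualStep // P p ∧ B p} := by
  haveI hA : Finite {p : List DualStep // P p ∧ A p} :=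
    finite_sub _ (fun p hp => hP p hp.1)
  haveI hB : Finite {p : List DualStep // P p ∧ B p} :=
    finite_sub _ (fun p hp => hP p hp.1)
  rw [← Nat.card_sum]
  apply Nat.card_congr
  refine
    { toFun := fun x => if h : A x.1 then Sum.inl ⟨x.1, x.2.1, h⟩
        else Sum.inr ⟨x.1, x.2.1, x.2.2.resolve_left h⟩
      invFun := Sum.elim (fun y => ⟨y.1, y.2.1, Or.inl y.2.2⟩)
        (fun y => ⟨y.1, y.2.1, Or.inr y.2.2⟩)
      left_inv := ?_
      right_inv := ?_ }
  · rintro ⟨p, hp, hab⟩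
    by_cases h : A p <;> simp [h]
  · rintro (⟨p, hp, ha⟩ | ⟨p, hp, hb⟩)
    · simp [ha]
    · have hna : ¬ A p := fun h => hAB p h hb
      simp [hna]

/-- Number of paths with given length, height, and last-letter class. -/
def Ncnt (n j k : ℕ) : ℕ :=
  Nat.card {p : List DualStep //
    (p.length = n ∧ IsDualSkew p ∧ dualHeight p = (j : ℤ)) ∧ lastCls p = k}

lemma split2 (n j k₁ k₂ : ℕ) (hne : k₁ ≠ k₂) :
    Nat.card {p : List DualStep //
      (p.length = n ∧ IsDualSkew p ∧ dualHeight p = (j : ℤ)) ∧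
        (lastCls p = k₁ ∨ lastCls p = k₂)} = Ncnt n j k₁ + Ncnt n j k₂ :=
  card_or _ _ _ (fun p hp => hp.1) (fun p h1 h2 => hne (by omega))

lemma split3 (n j : ℕ) : dualCount n j = Ncnt n j 0 + Ncnt n j 1 + Ncnt n j 2 := by
  have e : dualCount n j = Nat.card {p : List DualStep //
      (p.length = n ∧ IsDualSkew p ∧ dualHeight p = (j : ℤ)) ∧
      ((lastCls p = 0 ∨ lastCls p = 1) ∨ lastCls p = 2)} :=
    Nat.card_congr (Equiv.subtypeEquivRight (fun p => by
      have := lastCls_cases p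
      tauto))
  have h1 : Nat.card {p : List DualStep //
      (p.length = n ∧ IsDualSkew p ∧ dualHeight p = (j : ℤ)) ∧
      ((lastCls p = 0 ∨ lastCls p = 1) ∨ lastCls p = 2)} =
      Nat.card {p : List DualStep //
        (p.length = n ∧ IsDualSkew p ∧ dualHeight p = (j : ℤ)) ∧
          (lastCls p = 0 ∨ lastCls p = 1)} + Ncnt n j 2 :=
    card_or _ _ _ (fun p hp => hp.1) (fun p h h' => by rcases h with h | h <;> omega)
  rw [e, h1, split2 n j 0 1 (by omega)]

lemma card_concat (n : ℕ) (j : ℤ) (hj : 0 ≤ j) (s : DualStep) :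
    Nat.card {p : List DualStep //
      (p.length = n + 1 ∧ IsDualSkew p ∧ dualHeight p = j) ∧ p.getLast? = some s} =
    Nat.card {q : List DualStep //
      (q.length = n ∧ IsDualSkew q ∧ dualHeight q = j - s.wt) ∧
        ((q.getLast? = some .blue → s ≠ .down) ∧
          (q.getLast? = some .down → s ≠ .blue))} := by
  have key : ∀ q : List DualStep,
      (((q ++ [s]).length = n + 1 ∧ IsDualSkew (q ++ [s]) ∧ dualHeight (q ++ [s]) = j) ∧
        (q ++ [s]).getLast? = some s) ↔
      ((q.length = n ∧ IsDualSkew q ∧ dualHeight q = j - s.wt) ∧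
        ((q.getLast? = some .blue → s ≠ .down) ∧
          (q.getLast? = some .down → s ≠ .blue))) := by
    intro q
    rw [List.length_append, dualHeight_concat, isDualSkew_concat, List.getLast?_concat]
    constructor
    · rintro ⟨⟨hl, ⟨hq, hh, hc⟩, hht⟩, -⟩
      exact ⟨⟨by simpa using hl, hq, by omega⟩, hc⟩
    · rintro ⟨⟨hl, hq, hht⟩, hc⟩
      exact ⟨⟨by simp [hl], ⟨hq, by omega, hc⟩, by omega⟩, rfl⟩
  apply Nat.card_congr
  refine
    { toFun := fun x => ⟨x.1.dropLast, by
        obtain ⟨q, hq⟩ := List.getLast?_eq_some_iff.mp x.2.2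
        have h2 := x.2
        rw [hq] at h2 ⊢
        rw [List.dropLast_concat]
        exact (key q).mp h2⟩
      invFun := fun y => ⟨y.1 ++ [s], (key y.1).mpr y.2⟩
      left_inv := ?_
      right_inv := ?_ }
  · rintro ⟨p, hp⟩
    obtain ⟨q, rfl⟩ := List.getLast?_eq_some_iff.mp hp.2
    exact Subtype.ext (by simp)
  · rintro ⟨q, hq⟩
    exact Subtype.ext (by simp)

lemma rec_up (n j : ℕ) : Ncnt (n + 1) (j + 1) 0 = dualCount n j := by
  have e1 : Ncnt (n + 1) (j + 1) 0 = Nat.card {p : List DualStep //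
      (p.length = n + 1 ∧ IsDualSkew p ∧ dualHeight p = ((j + 1 : ℕ) : ℤ)) ∧
        p.getLast? = some DualStep.up} :=
    Nat.card_congr (Equiv.subtypeEquivRight (fun p => by
      constructor
      · rintro ⟨h, hc⟩
        have hne : p ≠ [] := by
          intro h0
          rw [h0] at h
          simp at h
        exact ⟨h, (lastCls_iff_up hne).mp hc⟩
      · rintro ⟨h, hc⟩
        have hne : p ≠ [] := by
          intro h0
          rw [h0] at h
          simp at h
        exact ⟨h, (lastCls_iff_up hne).mpr hc⟩))
  rw [e1, card_concat n ((j + 1 : ℕ) : ℤ) (Int.natCast_nonneg _) DualStep.up]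
  refine Nat.card_congr (Equiv.subtypeEquivRight (fun q => ?_))
  constructor
  · rintro ⟨⟨h1, h2, h3⟩, -⟩
    refine ⟨h1, h2, ?_⟩
    simp only [DualStep.wt] at h3
    omega
  · rintro ⟨h1, h2, h3⟩
    refine ⟨⟨h1, h2, ?_⟩, fun _ => by simp, fun _ => by simp⟩
    simp only [DualStep.wt]
    omega

lemma rec_blue (n j : ℕ) : Ncnt (n + 1) (j + 1) 1 = Ncnt n j 0 + Ncnt n j 1 := by
  have e1 : Ncnt (n + 1) (j + 1) 1 = Nat.card {p : List DualStep //
      (p.length = n + 1 ∧ IsDualSkew p ∧ dualHeight p = ((j + 1 : ℕ) : ℤ)) ∧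
        p.getLast? = some DualStep.blue} :=
    Nat.card_congr (Equiv.subtypeEquivRight (fun p =>
      and_congr_right (fun _ => lastCls_iff_blue)))
  rw [e1, card_concat n ((j + 1 : ℕ) : ℤ) (Int.natCast_nonneg _) DualStep.blue,
    ← split2 n j 0 1 (by omega)]
  refine Nat.card_congr (Equiv.subtypeEquivRight (fun q => ?_))
  constructor
  · rintro ⟨⟨h1, h2, h3⟩, -, hc2⟩
    refine ⟨⟨h1, h2, by simp only [DualStep.wt] at h3; omega⟩, ?_⟩
    have hnd : q.getLast? ≠ some DualStep.down := fun h => (hc2 h) rfl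
    rcases lastCls_cases q with h | h | h
    · exact Or.inl h
    · exact Or.inr h
    · exact absurd (lastCls_iff_down.mp h) hnd
  · rintro ⟨⟨h1, h2, h3⟩, hk⟩
    refine ⟨⟨h1, h2, by simp only [DualStep.wt]; omega⟩, fun _ => by simp, ?_⟩
    intro hd _
    have hcl := lastCls_iff_down.mpr hd
    rcases hk with h | h <;> omega

lemma rec_down (n j : ℕ) : Ncnt (n + 1) j 2 = Ncnt n (j + 1) 0 + Ncnt n (j + 1) 2 := by
  have e1 : Ncnt (n + 1) j 2 = Nat.card {p : List DualStep //
      (p.length = n + 1 ∧ IsDualSkew p ∧ dualHeight p = ((j : ℕ) : ℤ)) ∧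
        p.getLast? = some DualStep.down} :=
    Nat.card_congr (Equiv.subtypeEquivRight (fun p =>
      and_congr_right (fun _ => lastCls_iff_down)))
  rw [e1, card_concat n ((j : ℕ) : ℤ) (Int.natCast_nonneg _) DualStep.down,
    ← split2 n (j + 1) 0 2 (by omega)]
  refine Nat.card_congr (Equiv.subtypeEquivRight (fun q => ?_))
  constructor
  · rintro ⟨⟨h1, h2, h3⟩, hc1, -⟩
    refine ⟨⟨h1, h2, by simp only [DualStep.wt] at h3; omega⟩, ?_⟩
    have hnb : q.getLast? ≠ some DualStep.blue := fun h => (hc1 h) rfl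
    rcases lastCls_cases q with h | h | h
    · exact Or.inl h
    · exact absurd (lastCls_iff_blue.mp h) hnb
    · exact Or.inr h
  · rintro ⟨⟨h1, h2, h3⟩, hk⟩
    refine ⟨⟨h1, h2, by simp only [DualStep.wt]; omega⟩, ?_, fun _ => by simp⟩
    intro hb _
    have hcl := lastCls_iff_blue.mpr hb
    rcases hk with h | h <;> omega

lemma rec_up_zero (n : ℕ) : Ncnt (n + 1) 0 0 = 0 := by
  haveI : IsEmpty {p : List DualStep //
      (p.length = n + 1 ∧ IsDualSkew p ∧ dualHeight p = ((0 : ℕ) : ℤ)) ∧ lastCls p = 0} := by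
    constructor
    rintro ⟨p, ⟨hl, hsk, hh⟩, hc⟩
    have hne : p ≠ [] := by
      intro h
      rw [h] at hl
      simp at hl
    have hlast := (lastCls_iff_up hne).mp hc
    obtain ⟨q, rfl⟩ := List.getLast?_eq_some_iff.mp hlast
    obtain ⟨hq, hh2, -⟩ := isDualSkew_concat.mp hsk
    have h0 := hq.1 q List.prefix_rfl
    rw [dualHeight_concat] at hh
    simp only [DualStep.wt] at hh
    omega
  exact Nat.card_of_isEmpty

lemma rec_blue_zero (n : ℕ) : Ncnt (n + 1) 0 1 = 0 := by
  haveI : IsEmpty {p : List DualStep //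
      (p.length = n + 1 ∧ IsDualSkew p ∧ dualHeight p = ((0 : ℕ) : ℤ)) ∧ lastCls p = 1} := by
    constructor
    rintro ⟨p, ⟨hl, hsk, hh⟩, hc⟩
    have hlast := lastCls_iff_blue.mp hc
    obtain ⟨q, rfl⟩ := List.getLast?_eq_some_iff.mp hlast
    obtain ⟨hq, hh2, -⟩ := isDualSkew_concat.mp hsk
    have h0 := hq.1 q List.prefix_rfl
    rw [dualHeight_concat] at hh
    simp only [DualStep.wt] at hh
    omega
  exact Nat.card_of_isEmpty

lemma base0 (j k : ℕ) (h : ¬ (j = 0 ∧ k = 0)) : Ncnt 0 j k = 0 := by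
  haveI : IsEmpty {p : List DualStep //
      (p.length = 0 ∧ IsDualSkew p ∧ dualHeight p = (j : ℤ)) ∧ lastCls p = k} := by
    constructor
    rintro ⟨p, ⟨hl, hsk, hh⟩, hc⟩
    rw [List.length_eq_zero_iff.mp hl] at hh hc
    simp [dualHeight] at hh
    simp [lastCls] at hc
    exact h ⟨by omega, hc.symm⟩
  exact Nat.card_of_isEmpty

lemma base1 : Ncnt 0 0 0 = 1 := by
  haveI : Unique {p : List DualStep //
      (p.length = 0 ∧ IsDualSkew p ∧ dualHeight p = ((0 : ℕ) : ℤ)) ∧ lastCls p = 0} :=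
    { default := ⟨[], ⟨rfl, isDualSkew_nil, by simp [dualHeight]⟩, rfl⟩
      uniq := by
        rintro ⟨p, ⟨hl, -, -⟩, -⟩
        exact Subtype.ext (List.length_eq_zero_iff.mp hl) }
  exact Nat.card_unique

/-- Closed form for paths ending in `U` (or empty). -/
def Aser (S : PowerSeries ℚ) : ℕ → PowerSeries ℚ
  | 0 => 1
  | j + 1 => (S - 1) * PowerSeries.X ^ (j + 1) * S ^ j

/-- Closed form for paths ending in `V`. -/
def Bser (S : PowerSeries ℚ) : ℕ → PowerSeries ℚ
  | 0 => 0
  | j + 1 => PowerSeries.X ^ (j + 1) * S ^ j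

/-- Closed form for paths ending in `D`. -/
def Cser (S : PowerSeries ℚ) (j : ℕ) : PowerSeries ℚ :=
  (S - 2) * PowerSeries.X ^ j * S ^ j

lemma sumser (S : PowerSeries ℚ) (j : ℕ) :
    Aser S j + Bser S j + Cser S j = (S - 1) * PowerSeries.X ^ j * S ^ j := by
  cases j with
  | zero => simp only [Aser, Bser, Cser]; ring
  | succ j => simp only [Aser, Bser, Cser]; ring

lemma recA (S : PowerSeries ℚ) (j : ℕ) :
    Aser S (j + 1) = PowerSeries.X * ((S - 1) * PowerSeries.X ^ j * S ^ j) := by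
  simp only [Aser]; ring

lemma recB (S : PowerSeries ℚ) (j : ℕ) :
    Bser S (j + 1) = PowerSeries.X * (Aser S j + Bser S j) := by
  cases j with
  | zero => simp only [Aser, Bser]; ring
  | succ j => simp only [Aser, Bser]; ring

lemma recC (S : PowerSeries ℚ)
    (hQ : PowerSeries.X ^ 2 * S ^ 2 - (1 + PowerSeries.X ^ 2) * S +
      (2 - PowerSeries.X ^ 2) = (0 : PowerSeries ℚ)) (j : ℕ) :
    Cser S j = PowerSeries.X * (Aser S (j + 1) + Cser S (j + 1)) := by
  simp only [Aser, Cser]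
  linear_combination (-(PowerSeries.X : PowerSeries ℚ) ^ j * S ^ j) * hQ

lemma main_coeff (S : PowerSeries ℚ) (hS0 : PowerSeries.constantCoeff S = 2)
    (hQ : PowerSeries.X ^ 2 * S ^ 2 - (1 + PowerSeries.X ^ 2) * S +
      (2 - PowerSeries.X ^ 2) = (0 : PowerSeries ℚ)) :
    ∀ n j : ℕ, ((Ncnt n j 0 : ℚ) = coeff n (Aser S j)) ∧
      ((Ncnt n j 1 : ℚ) = coeff n (Bser S j)) ∧
      ((Ncnt n j 2 : ℚ) = coeff n (Cser S j)) := by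
  intro n
  induction n with
  | zero =>
    intro j
    refine ⟨?_, ?_, ?_⟩
    · cases j with
      | zero => rw [base1]; simp [Aser]
      | succ j =>
        rw [base0 _ _ (by omega)]
        simp [Aser, coeff_zero_eq_constantCoeff, map_mul, map_pow, constantCoeff_X]
    · rw [base0 _ _ (by omega)]
      cases j with
      | zero => simp [Bser]
      | succ j =>
        simp [Bser, coeff_zero_eq_constantCoeff, map_mul, map_pow, constantCoeff_X]
    · rw [base0 _ _ (by omega)]
      cases j with
      | zero =>
        simp [Cser, coeff_zero_eq_constantCoeff, map_mul, map_sub, map_ofNat, hS0]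
      | succ j =>
        simp [Cser, coeff_zero_eq_constantCoeff, map_mul, map_pow, constantCoeff_X]
  | succ n ih =>
    intro j
    refine ⟨?_, ?_, ?_⟩
    · cases j with
      | zero =>
        rw [rec_up_zero]
        simp [Aser, coeff_one]
      | succ j =>
        rw [rec_up, split3]
        push_cast
        rw [recA S j, coeff_succ_X_mul, ← sumser S j, map_add, map_add]
        obtain ⟨h0, h1, h2⟩ := ih j
        rw [h0, h1, h2]
    · cases j with
      | zero =>
        rw [rec_blue_zero]
        simp [Bser]
      | succ j =>
        rw [rec_blue]
        push_cast
        rw [recB S j, coeff_succ_X_mul, map_add]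
        obtain ⟨h0, h1, -⟩ := ih j
        rw [h0, h1]
    · rw [rec_down]
      push_cast
      rw [recC S hQ j, coeff_succ_X_mul, map_add]
      obtain ⟨h0, -, h2⟩ := ih (j + 1)
      rw [h0, h2]

lemma gf (S : PowerSeries ℚ) (hS0 : PowerSeries.constantCoeff S = 2)
    (hQ : PowerSeries.X ^ 2 * S ^ 2 - (1 + PowerSeries.X ^ 2) * S +
      (2 - PowerSeries.X ^ 2) = (0 : PowerSeries ℚ)) (j : ℕ) :
    PowerSeries.mk (fun n => (dualCount n j : ℚ)) =
      (S - 1) * PowerSeries.X ^ j * S ^ j := by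
  ext n
  rw [coeff_mk, split3]
  push_cast
  obtain ⟨h0, h1, h2⟩ := main_coeff S hS0 hQ n j
  rw [h0, h1, h2, ← map_add, ← map_add, sumser]

end DualSkewAux

open DualSkewAux PowerSeries in
theorem dual_skew_dyck_partial_gf (W : PowerSeries ℚ)
    (hW0 : PowerSeries.constantCoeff W = 1)
    (hW : W ^ 2 = 1 - 6 * PowerSeries.X ^ 2 + 5 * PowerSeries.X ^ 4)
    (S : PowerSeries ℚ)
    (hS : 2 * PowerSeries.X ^ 2 * S = 1 + PowerSeries.X ^ 2 - W)
    (hS0 : PowerSeries.constantCoeff S = 2)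
    (j : ℕ) :
    IsUnit (PowerSeries.X ^ 2 - 2 : PowerSeries ℚ) ∧
    PowerSeries.mk (fun n => (dualCount n j : ℚ)) =
      (3 * PowerSeries.X ^ 2 - 3 + W) * PowerSeries.X ^ j * S ^ (j + 1) *
        (2 * (PowerSeries.X ^ 2 - 2))⁻¹ := by
  have hW' : W = 1 + PowerSeries.X ^ 2 - 2 * PowerSeries.X ^ 2 * S := by
    linear_combination hS
  have hWe := hW
  rw [hW'] at hWe
  have h44 : (4 : PowerSeries ℚ) * PowerSeries.X ^ 2 *
      (PowerSeries.X ^ 2 * S ^ 2 - (1 + PowerSeries.X ^ 2) * S +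
        (2 - PowerSeries.X ^ 2)) = 0 := by
    linear_combination hWe
  have hQ : PowerSeries.X ^ 2 * S ^ 2 - (1 + PowerSeries.X ^ 2) * S +
      (2 - PowerSeries.X ^ 2) = (0 : PowerSeries ℚ) := by
    have h4 : ((4 : PowerSeries ℚ) * PowerSeries.X ^ 2) *
        (PowerSeries.X ^ 2 * S ^ 2 - (1 + PowerSeries.X ^ 2) * S +
          (2 - PowerSeries.X ^ 2)) = 0 := by
      linear_combination h44
    rcases mul_eq_zero.mp h4 with h | h
    · exfalso
      have h4ne : (4 : PowerSeries ℚ) ≠ 0 := by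
        intro hc
        have := congrArg (PowerSeries.constantCoeff) hc
        rw [map_ofNat] at this
        norm_num at this
      have hXne : (PowerSeries.X : PowerSeries ℚ) ^ 2 ≠ 0 :=
        pow_ne_zero _ PowerSeries.X_ne_zero
      exact (mul_ne_zero h4ne hXne) h
    · exact h
  constructor
  · rw [PowerSeries.isUnit_iff_constantCoeff]
    simp only [map_sub, map_pow, PowerSeries.constantCoeff_X, map_ofNat]
    norm_num
  · rw [gf S hS0 hQ j]
    rw [PowerSeries.eq_mul_inv_iff_mul_eq (by
      simp only [map_mul, map_sub, map_pow, PowerSeries.constantCoeff_X, map_ofNat]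
      norm_num), hW']
    linear_combination (2 * (PowerSeries.X : PowerSeries ℚ) ^ j * S ^ j) * hQ
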